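/- Let A(λ) = I_n·λ^r + A_1·λ^{r−1} + ... + A_r and B(λ) = I_n·λ^r + B_1·λ^{r−1} + ... + B_r be monic n×n matrix polynomials of degree r over ℂ that are equivalent, with common Smith normal form S(λ) = diag(s_1(λ), ..., s_{n−1}(λ), s_n(λ)). Let d(λ) = s_1(λ)···s_{n−1}(λ) and let C(λ) be the matrix with B*(λ) = d(λ)·C(λ), where B*(λ) is the adjugate of B(λ). Then the families {A_1, ..., A_r} and {B_1, ..., B_r} are simultaneously similar over ℂ (i.e. there exists T ∈ GL(n, ℂ) with A_i = T·B_i·T^{−1} for all i = 1, ..., r) if and only if there exists a nonsingular constant matrix V ∈ M_{n×n}(ℂ) such that s_n(λ) divides every entry of C(λ)·V·A(λ); moreover, for any such nonsingular V one has A_i = V^{−1}·B_i·V for all i = 1, ..., r. -/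

import Mathlib

open Polynomial

private lemma coeff_form' {n r : ℕ} (F : Fin r → Matrix (Fin n) (Fin n) ℂ) (k : ℕ) :
    (matPolyEquiv ((X ^ r : ℂ[X]) • (1 : Matrix (Fin n) (Fin n) ℂ[X]) +
      ∑ i : Fin r, (X ^ (r - 1 - (i : ℕ)) : ℂ[X]) • (F i).map Polynomial.C)).coeff k =
    (if k = r then 1 else 0) + ∑ i : Fin r, (if k = r - 1 - (i : ℕ) then F i else 0) := by
  ext p q
  rw [matPolyEquiv_coeff_apply]
  have h1 : ((X ^ r : ℂ[X]) • (1 : Matrix (Fin n) (Fin n) ℂ[X]) +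
      ∑ i : Fin r, (X ^ (r - 1 - (i : ℕ)) : ℂ[X]) • (F i).map Polynomial.C) p q
      = (if p = q then (X:ℂ[X]) ^ r else 0) +
        ∑ i : Fin r, Polynomial.C (F i p q) * X ^ (r - 1 - (i:ℕ)) := by
    simp only [Matrix.add_apply, Matrix.sum_apply, Matrix.smul_apply, smul_eq_mul,
      Matrix.one_apply, mul_ite, mul_one, mul_zero, Matrix.map_apply]
    congr 1
    apply Finset.sum_congr rfl
    intro i _
    exact mul_comm _ _
  rw [h1]
  simp only [coeff_add, finset_sum_coeff, coeff_C_mul_X_pow, Matrix.sum_apply,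
    apply_ite (fun f : ℂ[X] => f.coeff k), coeff_X_pow, coeff_zero,
    apply_ite (fun M : Matrix (Fin n) (Fin n) ℂ => M p q), Matrix.one_apply,
    Matrix.zero_apply, Matrix.add_apply]
  congr 1
  · split_ifs <;> rfl

private lemma coeff_facts' {n r : ℕ} (F : Fin r → Matrix (Fin n) (Fin n) ℂ)
    (f : (Matrix (Fin n) (Fin n) ℂ)[X])
    (hf : f = matPolyEquiv ((X ^ r : ℂ[X]) • (1 : Matrix (Fin n) (Fin n) ℂ[X]) +
      ∑ i : Fin r, (X ^ (r - 1 - (i : ℕ)) : ℂ[X]) • (F i).map Polynomial.C)) :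
    f.coeff r = 1 ∧ (∀ k, r < k → f.coeff k = 0) ∧
      (∀ k, (hk : k < r) → f.coeff k = F ⟨r - 1 - k, by omega⟩) ∧
      (∀ i : Fin r, f.coeff (r - 1 - (i : ℕ)) = F i) := by
  subst hf
  have h3 : ∀ k, (hk : k < r) →
      (matPolyEquiv ((X ^ r : ℂ[X]) • (1 : Matrix (Fin n) (Fin n) ℂ[X]) +
        ∑ i : Fin r, (X ^ (r - 1 - (i : ℕ)) : ℂ[X]) • (F i).map Polynomial.C)).coeff k
      = F ⟨r - 1 - k, by omega⟩ := by
    intro k hk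
    rw [coeff_form', if_neg (by omega), zero_add]
    rw [Finset.sum_eq_single (⟨r - 1 - k, by omega⟩ : Fin r)]
    · exact if_pos (by simp only [Fin.val_mk]; omega)
    · intro j _ hj
      have hjlt := j.isLt
      apply if_neg
      intro h
      apply hj
      ext
      simp only [Fin.val_mk]
      omega
    · intro h
      exact absurd (Finset.mem_univ _) h
  refine ⟨?_, ?_, h3, ?_⟩
  · rw [coeff_form', if_pos rfl, Finset.sum_eq_zero, add_zero]
    intro i _
    have := i.isLt
    exact if_neg (by omega)
  · intro k hk
    rw [coeff_form', if_neg (by omega), Finset.sum_eq_zero, add_zero]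
    · intro i _
      have := i.isLt
      exact if_neg (by omega)
  · intro i
    have hi := i.isLt
    rw [h3 _ (by omega)]
    have hfe : (⟨r - 1 - (r - 1 - (i:ℕ)), by omega⟩ : Fin r) = i :=
      Fin.ext (show r - 1 - (r - 1 - (i:ℕ)) = (i:ℕ) by omega)
    exact congrArg F hfe

/-- **Corollary 3.2.** Let `A(λ) = Iₙλ^r + A₁λ^{r-1} + ⋯ + A_r` and
`B(λ) = Iₙλ^r + B₁λ^{r-1} + ⋯ + B_r` be monic `n × n` matrix polynomials of degree `r`
over `ℂ` that are equivalent, with common Smith normal form `diag(s₁, …, sₙ)`.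
Let `d = s₁ ⋯ s_{n-1}` and write `B*(λ) = d(λ)·C(λ)`. Then the families
`{A₁, …, A_r}` and `{B₁, …, B_r}` are simultaneously similar over `ℂ` iff there exists a
nonsingular constant matrix `V` such that `sₙ(λ)` divides every entry of `C(λ)·V·A(λ)`;
moreover, for any such nonsingular `V` one has `Aᵢ = V⁻¹·Bᵢ·V` for all `i`. -/
theorem families_similar_iff_exists_nonsingular_solution
    {n r : ℕ} (hn : 1 ≤ n)
    (Acoef Bcoef : Fin r → Matrix (Fin n) (Fin n) ℂ)
    (A B : Matrix (Fin n) (Fin n) ℂ[X])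
    (hAdef : A = (X ^ r : ℂ[X]) • (1 : Matrix (Fin n) (Fin n) ℂ[X]) +
      ∑ i : Fin r, (X ^ (r - 1 - (i : ℕ)) : ℂ[X]) • (Acoef i).map Polynomial.C)
    (hBdef : B = (X ^ r : ℂ[X]) • (1 : Matrix (Fin n) (Fin n) ℂ[X]) +
      ∑ i : Fin r, (X ^ (r - 1 - (i : ℕ)) : ℂ[X]) • (Bcoef i).map Polynomial.C)
    (s : Fin n → ℂ[X]) (hmonic : ∀ i, (s i).Monic)
    (hchain : ∀ i j : Fin n, i ≤ j → s i ∣ s j)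
    (hsmithA : ∃ U V : Matrix (Fin n) (Fin n) ℂ[X],
      IsUnit U.det ∧ IsUnit V.det ∧ U * A * V = Matrix.diagonal s)
    (hsmithB : ∃ U V : Matrix (Fin n) (Fin n) ℂ[X],
      IsUnit U.det ∧ IsUnit V.det ∧ U * B * V = Matrix.diagonal s)
    (d : ℂ[X]) (hd : d = ∏ i ∈ Finset.univ.filter (fun i : Fin n => (i : ℕ) < n - 1), s i)
    (Cm : Matrix (Fin n) (Fin n) ℂ[X]) (hCm : ∀ p q, B.adjugate p q = d * Cm p q) :
    ((∃ T : Matrix (Fin n) (Fin n) ℂ, IsUnit T.det ∧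
        ∀ i : Fin r, Acoef i = T * Bcoef i * T⁻¹) ↔
      (∃ V : Matrix (Fin n) (Fin n) ℂ, V.det ≠ 0 ∧
        ∀ p q : Fin n, s ⟨n - 1, by omega⟩ ∣ (Cm * V.map Polynomial.C * A) p q)) ∧
    (∀ V : Matrix (Fin n) (Fin n) ℂ, V.det ≠ 0 →
      (∀ p q : Fin n, s ⟨n - 1, by omega⟩ ∣ (Cm * V.map Polynomial.C * A) p q) →
      ∀ i : Fin r, Acoef i = V⁻¹ * Bcoef i * V) := by
  classical
  haveI : NeZero n := ⟨by omega⟩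
  -- notation
  set sl : ℂ[X] := s ⟨n - 1, by omega⟩ with hsl
  -- basic monicity facts
  have hd_monic : d.Monic := by
    rw [hd]; exact monic_prod_of_monic _ _ fun i _ => hmonic i
  have hsl_monic : sl.Monic := hmonic _
  have hd_ne : d ≠ 0 := hd_monic.ne_zero
  -- product of invariant factors
  have hprod : (∏ i : Fin n, s i) = d * sl := by
    rw [hd, ← Finset.prod_filter_mul_prod_filter_not Finset.univ
      (fun i : Fin n => (i : ℕ) < n - 1) s]
    congr 1
    have hfil : Finset.univ.filter (fun i : Fin n => ¬ (i : ℕ) < n - 1)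
        = {(⟨n - 1, by omega⟩ : Fin n)} := by
      ext i
      have := i.isLt
      simp only [Finset.mem_filter, Finset.mem_univ, true_and, Finset.mem_singleton,
        Fin.ext_iff, Fin.val_mk]
      omega
    rw [hfil, Finset.prod_singleton]
  obtain ⟨U1, W1, hU1, hW1, hUBW⟩ := hsmithB
  set u : ℂ[X] := U1.det * W1.det with hu_def
  have hu : IsUnit u := hU1.mul hW1
  have hudetB : u * B.det = d * sl := by
    have h := congrArg Matrix.det hUBW
    rw [Matrix.det_mul, Matrix.det_mul, Matrix.det_diagonal] at h
    calc u * B.det = U1.det * B.det * W1.det := by rw [hu_def]; ring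
      _ = ∏ i, s i := h
      _ = d * sl := hprod
  have hB_ne : B.det ≠ 0 := by
    intro h
    rw [h, mul_zero] at hudetB
    exact (hd_monic.mul hsl_monic).ne_zero hudetB.symm
  have hadj : B.adjugate = d • Cm := by
    refine Matrix.ext fun p q => ?_
    rw [Matrix.smul_apply, smul_eq_mul]
    exact hCm p q
  -- u • (Cm * B) = sl • 1
  have hCmB : ∀ p j, u * (Cm * B) p j = sl * (1 : Matrix (Fin n) (Fin n) ℂ[X]) p j := by
    intro p j
    have h := congrArg (fun M : Matrix (Fin n) (Fin n) ℂ[X] => M p j) (Matrix.adjugate_mul B)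
    simp only [hadj, Matrix.smul_mul, Matrix.smul_apply, smul_eq_mul] at h
    apply mul_left_cancel₀ hd_ne
    calc d * (u * (Cm * B) p j) = u * (d * (Cm * B) p j) := by ring
      _ = u * (B.det * (1 : Matrix (Fin n) (Fin n) ℂ[X]) p j) := by rw [h]
      _ = (u * B.det) * (1 : Matrix (Fin n) (Fin n) ℂ[X]) p j := by ring
      _ = d * (sl * (1 : Matrix (Fin n) (Fin n) ℂ[X]) p j) := by rw [hudetB]; ring
  have hslCmB : ∀ p j, sl ∣ (Cm * B) p j := by
    intro p j
    obtain ⟨u', hu'⟩ := hu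
    refine ⟨(↑u'⁻¹ : ℂ[X]) * (1 : Matrix (Fin n) (Fin n) ℂ[X]) p j, ?_⟩
    have h := hCmB p j
    rw [← hu'] at h
    calc (Cm * B) p j = (↑u'⁻¹ * ↑u') * (Cm * B) p j := by
          rw [Units.inv_mul, one_mul]
      _ = (↑u'⁻¹ : ℂ[X]) * (↑u' * (Cm * B) p j) := by ring
      _ = (↑u'⁻¹ : ℂ[X]) * (sl * (1 : Matrix (Fin n) (Fin n) ℂ[X]) p j) := by rw [h]
      _ = sl * ((↑u'⁻¹ : ℂ[X]) * (1 : Matrix (Fin n) (Fin n) ℂ[X]) p j) := by ring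
  -- matPolyEquiv images
  set a : (Matrix (Fin n) (Fin n) ℂ)[X] := matPolyEquiv A with ha_def
  set b : (Matrix (Fin n) (Fin n) ℂ)[X] := matPolyEquiv B with hb_def
  obtain ⟨haR, haHigh, haLow, haFin⟩ := coeff_facts' Acoef a (by rw [ha_def, hAdef])
  obtain ⟨hbR, hbHigh, hbLow, hbFin⟩ := coeff_facts' Bcoef b (by rw [hb_def, hBdef])
  have hadegle : a.natDegree ≤ r := natDegree_le_iff_coeff_eq_zero.mpr haHigh
  have hbdeg : b.natDegree = r := le_antisymm
    (natDegree_le_iff_coeff_eq_zero.mpr hbHigh)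
    (le_natDegree_of_ne_zero (by rw [hbR]; exact one_ne_zero))
  have hbmonic : b.Monic := by
    unfold Polynomial.Monic Polynomial.leadingCoeff
    rw [hbdeg, hbR]
  -- the moreover part
  have main : ∀ V : Matrix (Fin n) (Fin n) ℂ, V.det ≠ 0 →
      (∀ p q : Fin n, sl ∣ (Cm * V.map Polynomial.C * A) p q) →
      ∀ i : Fin r, Acoef i = V⁻¹ * Bcoef i * V := by
    intro V hV hdiv
    have hVne : V ≠ 0 := fun h => hV (by haveI : Nonempty (Fin n) := ⟨⟨0, by omega⟩⟩; rw [h, Matrix.det_zero])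
    -- construct W with B * W = V.map C * A
    have hdvd : ∀ p q, B.det ∣ (B.adjugate * (V.map Polynomial.C * A)) p q := by
      intro p q
      obtain ⟨x, hx⟩ := hdiv p q
      obtain ⟨u', hu'⟩ := hu
      refine ⟨(↑u' : ℂ[X]) * x, ?_⟩
      have h1 : (B.adjugate * (V.map Polynomial.C * A)) p q
          = d * ((Cm * V.map Polynomial.C * A) p q) := by
        rw [hadj, Matrix.smul_mul, Matrix.smul_apply, smul_eq_mul, Matrix.mul_assoc]
      rw [h1, hx]
      calc d * (sl * x) = (d * sl) * x := by ring
        _ = (u * B.det) * x := by rw [hudetB]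
        _ = B.det * (↑u' * x) := by rw [← hu']; ring
    choose Wf hWf using hdvd
    set Wm : Matrix (Fin n) (Fin n) ℂ[X] := Matrix.of Wf with hWm_def
    have hBW : B * Wm = V.map Polynomial.C * A := by
      have hsmul : (B.det • Wm) = B.adjugate * (V.map Polynomial.C * A) := by
        refine Matrix.ext fun p q => ?_
        rw [Matrix.smul_apply, smul_eq_mul]
        exact (hWf p q).symm
      have h2 : B * (B.det • Wm) = B.det • (V.map Polynomial.C * A) := by
        rw [hsmul, ← Matrix.mul_assoc, Matrix.mul_adjugate, Matrix.smul_mul, Matrix.one_mul]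
      rw [Matrix.mul_smul] at h2
      refine Matrix.ext fun p q => ?_
      have h3 := congrArg (fun M : Matrix (Fin n) (Fin n) ℂ[X] => M p q) h2
      simp only [Matrix.smul_apply, smul_eq_mul] at h3
      exact mul_left_cancel₀ hB_ne h3
    set w : (Matrix (Fin n) (Fin n) ℂ)[X] := matPolyEquiv Wm with hw_def
    have heq : b * w = Polynomial.C V * a := by
      have h := congrArg matPolyEquiv hBW
      rw [map_mul, map_mul, matPolyEquiv_map_C] at h
      exact h
    have hwne : w ≠ 0 := by
      intro h
      rw [h, mul_zero] at heq
      have h4 := congrArg (fun p : (Matrix (Fin n) (Fin n) ℂ)[X] => p.coeff r) heq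
      simp only [coeff_zero, coeff_C_mul, haR, mul_one] at h4
      exact hVne h4.symm
    have hwdeg : w.natDegree = 0 := by
      have h1 : (b * w).natDegree = r + w.natDegree := by
        rw [Polynomial.natDegree_mul' (by
          rw [hbmonic.leadingCoeff, one_mul]
          exact leadingCoeff_ne_zero.mpr hwne), hbdeg]
      have h2 : (Polynomial.C V * a).natDegree ≤ r :=
        le_trans (natDegree_mul_le) (by rw [natDegree_C, zero_add]; exact hadegle)
      rw [heq] at h1
      omega
    obtain ⟨w0, hw0⟩ : ∃ w0, Polynomial.C w0 = w :=
      ⟨w.coeff 0, (eq_C_coeff_zero_iff_natDegree_eq_zero.mpr hwdeg).symm⟩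
    have hw0V : w0 = V := by
      have h4 := congrArg (fun p : (Matrix (Fin n) (Fin n) ℂ)[X] => p.coeff r) heq
      simp only [← hw0, coeff_mul_C, coeff_C_mul, haR, hbR, one_mul, mul_one] at h4
      exact h4
    intro i
    have hkey : Bcoef i * V = V * Acoef i := by
      have hi := i.isLt
      have h5 := congrArg (fun p : (Matrix (Fin n) (Fin n) ℂ)[X] =>
        p.coeff (r - 1 - (i : ℕ))) heq
      simp only [← hw0, hw0V, coeff_mul_C, coeff_C_mul] at h5
      rw [hbFin i, haFin i] at h5
      exact h5
    have hVu : IsUnit V.det := isUnit_iff_ne_zero.mpr hV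
    calc Acoef i = (V⁻¹ * V) * Acoef i := by rw [Matrix.nonsing_inv_mul V hVu, Matrix.one_mul]
      _ = V⁻¹ * (V * Acoef i) := by rw [Matrix.mul_assoc]
      _ = V⁻¹ * (Bcoef i * V) := by rw [← hkey]
      _ = V⁻¹ * Bcoef i * V := by rw [Matrix.mul_assoc]
  refine ⟨⟨?_, ?_⟩, main⟩
  · rintro ⟨T, hT, hTi⟩
    refine ⟨T⁻¹, (Matrix.isUnit_nonsing_inv_det T hT).ne_zero, ?_⟩
    have hcoeff : ∀ k, T⁻¹ * a.coeff k = b.coeff k * T⁻¹ := by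
      intro k
      rcases lt_trichotomy k r with hk | hk | hk
      · rw [haLow k hk, hbLow k hk, hTi ⟨r - 1 - k, by omega⟩]
        rw [← Matrix.mul_assoc, ← Matrix.mul_assoc, Matrix.nonsing_inv_mul T hT,
          Matrix.one_mul]
      · subst hk
        rw [haR, hbR, Matrix.mul_one, Matrix.one_mul]
      · rw [haHigh k hk, hbHigh k hk, Matrix.mul_zero, Matrix.zero_mul]
    have hCVa : Polynomial.C T⁻¹ * a = b * Polynomial.C T⁻¹ := by
      apply Polynomial.ext
      intro k
      rw [coeff_C_mul, coeff_mul_C]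
      exact hcoeff k
    have hVA : (T⁻¹).map Polynomial.C * A = B * (T⁻¹).map Polynomial.C := by
      apply matPolyEquiv.injective
      rw [map_mul, map_mul, matPolyEquiv_map_C]
      exact hCVa
    intro p q
    have hre : Cm * (T⁻¹).map Polynomial.C * A = (Cm * B) * (T⁻¹).map Polynomial.C := by
      rw [Matrix.mul_assoc, hVA, ← Matrix.mul_assoc]
    rw [hre, Matrix.mul_apply]
    exact Finset.dvd_sum fun j _ => Dvd.dvd.mul_right (hslCmB p j) _
  · rintro ⟨V, hV, hdiv⟩
    have hVu : IsUnit V.det := isUnit_iff_ne_zero.mpr hV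
    refine ⟨V⁻¹, Matrix.isUnit_nonsing_inv_det V hVu, fun i => ?_⟩
    rw [Matrix.nonsing_inv_nonsing_inv V hVu]
    exact main V hV hdiv i
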